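/- Let r ≥ 1 and let n_1, …, n_r be positive integers, and let N ≥ 2 be divisible by each n_i with N/n_i ≥ 2 for all i. Let S be the set of tuples f = (f_1, …, f_r) where f_i : Fin N → Fin n_i and every fiber of each f_i has exactly N/n_i elements. Fix a label v, set α(f) = #{ j : f_i(j) = v_i for all i }, and let av = N / ∏_{i=1}^r n_i. Then the variance (1/|S|) · ∑_{f ∈ S} (α(f) − av)² equals, as a rational number, N/∏_{i=1}^r n_i − N²/∏_{i=1}^r n_i² + N(N−1) · ∏_{i=1}^r (N − n_i)/( n_i² (N − 1) ). -/

import Mathlib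

open Finset

namespace FirstWayAux

variable {N n m : ℕ}

/-- Balanced colorings: all fibers have size `m`. -/
abbrev Bal (N n m : ℕ) := {f : Fin N → Fin n //
  ∀ a : Fin n, (Finset.univ.filter fun k => f k = a).card = m}

lemma comp_mem (f : Fin N → Fin n)
    (hf : ∀ a : Fin n, (Finset.univ.filter fun k => f k = a).card = m)
    (σ : Equiv.Perm (Fin N)) :
    ∀ a : Fin n, (Finset.univ.filter fun k => f (σ k) = a).card = m := by
  intro a
  have himg : (Finset.univ.filter fun k => f (σ k) = a)
      = (Finset.univ.filter fun k => f k = a).image σ.symm := by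
    ext x
    simp only [Finset.mem_filter, Finset.mem_univ, true_and, Finset.mem_image]
    constructor
    · intro hx
      exact ⟨σ x, hx, by simp⟩
    · rintro ⟨y, hy, rfl⟩
      simpa using hy
  rw [himg, Finset.card_image_of_injective _ σ.symm.injective, hf]

lemma card_filter_comp (σ : Equiv.Perm (Fin N))
    (p : (Fin N → Fin n) → Prop) [DecidablePred p] :
    ((Finset.univ : Finset (Bal N n m)).filter fun f => p (f.1 ∘ σ)).card
      = ((Finset.univ : Finset (Bal N n m)).filter fun f => p f.1).card := by
  apply Finset.card_bij' (fun f _ => (⟨f.1 ∘ σ, comp_mem f.1 f.2 σ⟩ : Bal N n m))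
    (fun g _ => (⟨g.1 ∘ σ.symm, comp_mem g.1 g.2 σ.symm⟩ : Bal N n m))
  · intro f hf
    simp only [Finset.mem_filter, Finset.mem_univ, true_and] at hf ⊢
    exact hf
  · intro g hg
    simp only [Finset.mem_filter, Finset.mem_univ, true_and] at hg ⊢
    have : (g.1 ∘ σ.symm) ∘ σ = g.1 := by ext x; simp
    rw [this]
    exact hg
  · intro f _
    apply Subtype.ext
    ext x; simp
  · intro g _
    apply Subtype.ext
    ext x; simp

lemma exists_perm {j k j' k' : Fin N} (h : j ≠ k) (h' : j' ≠ k') :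
    ∃ σ : Equiv.Perm (Fin N), σ j' = j ∧ σ k' = k := by
  set σ₁ := Equiv.swap j' j with hσ₁
  set k'' := σ₁ k' with hk''
  have hkj : k'' ≠ j := by
    intro hc
    have h1 : σ₁ j' = j := Equiv.swap_apply_left _ _
    have : σ₁ k' = σ₁ j' := by rw [h1, ← hk'', hc]
    exact h' (σ₁.injective this).symm
  refine ⟨(Equiv.swap k'' k) * σ₁, ?_, ?_⟩
  · have : σ₁ j' = j := Equiv.swap_apply_left _ _
    simp only [Equiv.Perm.mul_apply, this]
    exact Equiv.swap_apply_of_ne_of_ne (Ne.symm hkj) h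
  · simp only [Equiv.Perm.mul_apply, ← hk'']
    exact Equiv.swap_apply_left _ _

lemma c1_indep (j j' : Fin N) (w : Fin n) :
    ((Finset.univ : Finset (Bal N n m)).filter fun f => f.1 j = w).card
      = ((Finset.univ : Finset (Bal N n m)).filter fun f => f.1 j' = w).card := by
  have := card_filter_comp (m := m) (Equiv.swap j j') (fun g => g j' = w)
  simpa [Equiv.swap_apply_right] using this

lemma c2_indep {j k j' k' : Fin N} (h : j ≠ k) (h' : j' ≠ k') (w : Fin n) :
    ((Finset.univ : Finset (Bal N n m)).filter fun f => f.1 j = w ∧ f.1 k = w).card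
      = ((Finset.univ : Finset (Bal N n m)).filter fun f => f.1 j' = w ∧ f.1 k' = w).card := by
  obtain ⟨σ, hσj, hσk⟩ := exists_perm h h'
  have := card_filter_comp (m := m) σ (fun g => g j' = w ∧ g k' = w)
  simpa [hσj, hσk] using this

lemma key1 (j : Fin N) (w : Fin n) :
    N * ((Finset.univ : Finset (Bal N n m)).filter fun f => f.1 j = w).card
      = Fintype.card (Bal N n m) * m := by
  have step : ∀ f : Bal N n m, (∑ j' : Fin N, if f.1 j' = w then (1:ℕ) else 0) = m := by
    intro f
    rw [← Finset.card_filter]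
    exact f.2 w
  have hsum : ∑ j' : Fin N,
      ((Finset.univ : Finset (Bal N n m)).filter fun f => f.1 j' = w).card
      = Fintype.card (Bal N n m) * m := by
    simp only [Finset.card_filter]
    rw [Finset.sum_comm]
    rw [Finset.sum_congr rfl fun f _ => step f]
    simp [Finset.card_univ]
  calc N * ((Finset.univ : Finset (Bal N n m)).filter fun f => f.1 j = w).card
      = ∑ _j' : Fin N,
        ((Finset.univ : Finset (Bal N n m)).filter fun f => f.1 j = w).card := by
        simp [Finset.sum_const, Finset.card_univ, mul_comm]
    _ = ∑ j' : Fin N,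
        ((Finset.univ : Finset (Bal N n m)).filter fun f => f.1 j' = w).card :=
        Finset.sum_congr rfl fun j' _ => c1_indep j j' w
    _ = _ := hsum

lemma key2 {j k : Fin N} (hjk : j ≠ k) (w : Fin n) :
    Fintype.card (Bal N n m) * (m * m) = Fintype.card (Bal N n m) * m
      + N * ((N - 1) *
        ((Finset.univ : Finset (Bal N n m)).filter fun f => f.1 j = w ∧ f.1 k = w).card) := by
  have hite : ∀ (p q : Prop) [Decidable p] [Decidable q],
      (if p ∧ q then (1:ℕ) else 0) = (if p then 1 else 0) * (if q then 1 else 0) := by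
    intro p q _ _
    by_cases h1 : p <;> by_cases h2 : q <;> simp [h1, h2]
  have step : ∀ f : Bal N n m, ∀ w' : Fin n,
      (∑ j' : Fin N, if f.1 j' = w' then (1:ℕ) else 0) = m := by
    intro f w'
    rw [← Finset.card_filter]
    exact f.2 w'
  have hall : ∑ j' : Fin N, ∑ k' : Fin N,
      ((Finset.univ : Finset (Bal N n m)).filter fun f => f.1 j' = w ∧ f.1 k' = w).card
      = Fintype.card (Bal N n m) * (m * m) := by
    simp only [Finset.card_filter]
    rw [Finset.sum_congr rfl fun j' (_ : j' ∈ Finset.univ) => Finset.sum_comm]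
    rw [Finset.sum_comm]
    have expand : ∀ f : Bal N n m,
        (∑ j' : Fin N, ∑ k' : Fin N,
          if f.1 j' = w ∧ f.1 k' = w then (1:ℕ) else 0) = m * m := by
      intro f
      simp only [hite]
      rw [← Finset.sum_mul_sum]
      rw [step f w]
    rw [Finset.sum_congr rfl fun f _ => expand f]
    simp [Finset.card_univ]
  have hsplit : ∀ j' : Fin N, (∑ k' : Fin N,
      ((Finset.univ : Finset (Bal N n m)).filter fun f => f.1 j' = w ∧ f.1 k' = w).card)
      = ((Finset.univ : Finset (Bal N n m)).filter fun f => f.1 j' = w).card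
        + (N - 1) *
          ((Finset.univ : Finset (Bal N n m)).filter fun f => f.1 j = w ∧ f.1 k = w).card := by
    intro j'
    rw [← Finset.add_sum_erase (Finset.univ) _ (Finset.mem_univ j')]
    congr 1
    · simp only [and_self]
    · rw [Finset.sum_congr rfl fun k' hk' =>
        c2_indep (Ne.symm (Finset.mem_erase.1 hk').1) hjk w]
      rw [Finset.sum_const, Finset.card_erase_of_mem (Finset.mem_univ j')]
      simp [Finset.card_univ, mul_comm]
  rw [← hall, Finset.sum_congr rfl fun j' _ => hsplit j', Finset.sum_add_distrib]
  rw [Finset.sum_congr rfl fun j' (_ : j' ∈ Finset.univ) => c1_indep j' j w]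
  rw [Finset.sum_const, Finset.card_univ, Fintype.card_fin, smul_eq_mul,
    ← Nat.mul_assoc, key1 j w]
  congr 1
  rw [Finset.sum_const, Finset.card_univ, Fintype.card_fin, smul_eq_mul, Nat.mul_assoc]

lemma bal_card_pos (hm : 0 < m) (hN : N = n * m) : 0 < Fintype.card (Bal N n m) := by
  rw [Fintype.card_pos_iff]
  have hlt : ∀ j : Fin N, j.1 / m < n := by
    intro j
    rw [Nat.div_lt_iff_lt_mul hm]
    have := j.2
    omega
  refine ⟨⟨fun j => ⟨j.1 / m, hlt j⟩, ?_⟩⟩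
  intro a
  conv_rhs => rw [← Finset.card_range m]
  refine Finset.card_bij' (fun j _ => j.1 - a.1 * m)
    (fun t ht => (⟨a.1 * m + t, by
      have htm : t < m := Finset.mem_range.1 ht
      have : a.1 + 1 ≤ n := a.2
      calc a.1 * m + t < a.1 * m + m := by omega
        _ = (a.1 + 1) * m := by ring
        _ ≤ n * m := Nat.mul_le_mul_right m this
        _ = N := hN.symm⟩ : Fin N)) ?hi ?hj ?li ?ri
  case hi =>
    intro j hjf
    simp only [Finset.mem_filter, Finset.mem_univ, true_and] at hjf
    have hj' : j.1 / m = a.1 := congrArg Fin.val hjf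
    have h1 : a.1 * m ≤ j.1 := by
      rw [← hj']
      exact Nat.div_mul_le_self j.1 m
    have h2 : j.1 < (a.1 + 1) * m := (Nat.div_lt_iff_lt_mul hm).1 (by omega)
    have h2' : j.1 < a.1 * m + m := by
      calc j.1 < (a.1 + 1) * m := h2
        _ = a.1 * m + m := by ring
    show j.1 - a.1 * m ∈ Finset.range m
    rw [Finset.mem_range]
    omega
  case hj =>
    intro t ht
    have htm : t < m := Finset.mem_range.1 ht
    simp only [Finset.mem_filter, Finset.mem_univ, true_and]
    apply Fin.ext
    show (a.1 * m + t) / m = a.1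
    rw [mul_comm, Nat.mul_add_div hm, Nat.div_eq_of_lt htm, add_zero]
  case li =>
    intro j hjf
    simp only [Finset.mem_filter, Finset.mem_univ, true_and] at hjf
    have hj' : j.1 / m = a.1 := congrArg Fin.val hjf
    have h1 : a.1 * m ≤ j.1 := by
      rw [← hj']
      exact Nat.div_mul_le_self j.1 m
    apply Fin.ext
    show a.1 * m + (j.1 - a.1 * m) = j.1
    omega
  case ri =>
    intro t ht
    show a.1 * m + t - a.1 * m = t
    omega

end FirstWayAux

set_option maxHeartbeats 1000000 in
open Finset FirstWayAux in
/-- **First Way**, exact variance of the label count: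
`(1/|S|) ∑_{f∈S} (α(f) - av)² = N/∏ n_i - N²/∏ n_i² + N(N-1) ∏ (N-n_i)/(n_i²(N-1))`,
where `av = N / ∏ n_i`, as rational numbers. -/
theorem firstWay_variance (r : ℕ) (hr : 1 ≤ r) (n : ℕ → ℕ)
    (hn : ∀ i ∈ Finset.Icc 1 r, 0 < n i)
    (N : ℕ) (hN : 2 ≤ N) (hdvd : ∀ i ∈ Finset.Icc 1 r, n i ∣ N)
    (hsize : ∀ i ∈ Finset.Icc 1 r, 2 ≤ N / n i)
    (v : ∀ i : Fin r, Fin (n (i.val + 1))) :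
    (1 : ℚ) / (Fintype.card {f : ∀ i : Fin r, Fin N → Fin (n (i.val + 1)) //
          ∀ (i : Fin r) (a : Fin (n (i.val + 1))),
            (Finset.univ.filter fun k => f i k = a).card = N / n (i.val + 1)} : ℚ) *
        (∑ f : {f : ∀ i : Fin r, Fin N → Fin (n (i.val + 1)) //
            ∀ (i : Fin r) (a : Fin (n (i.val + 1))),
              (Finset.univ.filter fun k => f i k = a).card = N / n (i.val + 1)},
          (((Finset.univ.filter fun j : Fin N => ∀ i : Fin r, f.1 i j = v i).card : ℚ) -
              (N : ℚ) / ∏ i ∈ Finset.Icc 1 r, (n i : ℚ)) ^ 2) =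
      (N : ℚ) / (∏ i ∈ Finset.Icc 1 r, (n i : ℚ)) -
        (N : ℚ) ^ 2 / (∏ i ∈ Finset.Icc 1 r, (n i : ℚ) ^ 2) +
        (N : ℚ) * ((N : ℚ) - 1) *
          ∏ i ∈ Finset.Icc 1 r,
            ((N : ℚ) - (n i : ℚ)) / ((n i : ℚ) ^ 2 * ((N : ℚ) - 1)) := by
  classical
  -- abbreviations
  set n' : Fin r → ℕ := fun i => n (i.val + 1) with hn'def
  set m' : Fin r → ℕ := fun i => N / n' i with hm'def
  have hmem : ∀ i : Fin r, i.val + 1 ∈ Finset.Icc 1 r := by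
    intro i
    simp only [Finset.mem_Icc]
    exact ⟨Nat.le_add_left 1 i.val, Nat.succ_le_of_lt i.2⟩
  have hn0 : ∀ i : Fin r, 0 < n' i := fun i => hn _ (hmem i)
  have hNm : ∀ i : Fin r, N = n' i * m' i :=
    fun i => (Nat.mul_div_cancel' (hdvd _ (hmem i))).symm
  have hm2 : ∀ i : Fin r, 2 ≤ m' i := fun i => hsize _ (hmem i)
  -- per-round spaces
  have hQpos : ∀ i : Fin r, 0 < Fintype.card (Bal N (n' i) (m' i)) :=
    fun i => bal_card_pos (by have := hm2 i; omega) (hNm i)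
  -- transport the sum to the product of the per-round spaces
  set av : ℚ := (N : ℚ) / ∏ i ∈ Finset.Icc 1 r, (n i : ℚ) with havdef
  set e := (Equiv.subtypePiEquivPi (p := fun (i : Fin r) (g : Fin N → Fin (n' i)) =>
      ∀ a : Fin (n' i), (Finset.univ.filter fun k => g k = a).card = m' i)) with hedef
  have hsum_eq : (∑ f : {f : ∀ i : Fin r, Fin N → Fin (n (i.val + 1)) //
            ∀ (i : Fin r) (a : Fin (n (i.val + 1))),
              (Finset.univ.filter fun k => f i k = a).card = N / n (i.val + 1)},
          (((Finset.univ.filter fun j : Fin N => ∀ i : Fin r, f.1 i j = v i).card : ℚ) -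
              av) ^ 2)
      = ∑ g : ∀ i : Fin r, Bal N (n' i) (m' i),
          (((Finset.univ.filter fun j : Fin N => ∀ i : Fin r, (g i).1 j = v i).card : ℚ) -
              av) ^ 2 := by
    exact Fintype.sum_equiv e _ _ (fun f => rfl)
  have hcard_eq : Fintype.card {f : ∀ i : Fin r, Fin N → Fin (n (i.val + 1)) //
          ∀ (i : Fin r) (a : Fin (n (i.val + 1))),
            (Finset.univ.filter fun k => f i k = a).card = N / n (i.val + 1)}
      = ∏ i : Fin r, Fintype.card (Bal N (n' i) (m' i)) := by
    rw [Fintype.card_congr e, Fintype.card_pi]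
  -- rational-valued counts
  set Qi : Fin r → ℚ := fun i => (Fintype.card (Bal N (n' i) (m' i)) : ℚ) with hQidef
  set Q : ℚ := ∏ i : Fin r, Qi i with hQdef
  have hQine : ∀ i, Qi i ≠ 0 := fun i => by
    have := hQpos i
    simp only [hQidef]
    positivity
  have hQne : Q ≠ 0 := Finset.prod_ne_zero_iff.2 fun i _ => hQine i
  have hNne : (N : ℚ) ≠ 0 := by
    have : (0:ℚ) < N := by exact_mod_cast Nat.lt_of_lt_of_le (by norm_num) hN
    linarith
  have hN1ne : (N : ℚ) - 1 ≠ 0 := by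
    have : (2:ℚ) ≤ N := by exact_mod_cast hN
    linarith
  set A1 : Fin r → Fin N → ℚ := fun i j =>
    (((Finset.univ : Finset (Bal N (n' i) (m' i))).filter fun h => h.1 j = v i).card : ℚ)
    with hA1def
  set A2 : Fin r → Fin N → Fin N → ℚ := fun i j k =>
    (((Finset.univ : Finset (Bal N (n' i) (m' i))).filter
      fun h => h.1 j = v i ∧ h.1 k = v i).card : ℚ) with hA2def
  set u : Fin r → ℚ := fun i => (m' i : ℚ) / N with hudef
  set w : Fin r → ℚ := fun i =>
    ((m' i : ℚ) * ((m' i : ℚ) - 1)) / ((N : ℚ) * ((N : ℚ) - 1)) with hwdef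
  have fact1 : ∀ (i : Fin r) (j : Fin N), A1 i j = Qi i * u i := by
    intro i j
    have h := key1 (N := N) (n := n' i) (m := m' i) j (v i)
    have hq : (N : ℚ) * A1 i j = Qi i * m' i := by
      simp only [hA1def, hQidef]
      exact_mod_cast congrArg (Nat.cast : ℕ → ℚ) h
    rw [hudef]
    field_simp
    linarith [hq]
  have fact2 : ∀ (i : Fin r) (j k : Fin N), j ≠ k → A2 i j k = Qi i * w i := by
    intro i j k hjk
    have h := key2 (N := N) (n := n' i) (m := m' i) hjk (v i)
    have hcast : ((N - 1 : ℕ) : ℚ) = (N : ℚ) - 1 := by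
      have h1 : 1 ≤ N := le_trans (by norm_num) hN
      push_cast [Nat.cast_sub h1]
      ring
    have hq : Qi i * ((m' i : ℚ) * m' i) = Qi i * m' i
        + (N : ℚ) * (((N : ℚ) - 1) * A2 i j k) := by
      have := congrArg (Nat.cast : ℕ → ℚ) h
      push_cast at this
      rw [hcast] at this
      simpa [hA2def, hQidef] using this
    rw [hwdef]
    field_simp
    ring_nf
    ring_nf at hq
    linarith [hq]
  -- expansion of the count as a sum of indicator products
  have hbeta : ∀ g : ∀ i : Fin r, Bal N (n' i) (m' i),
      ((Finset.univ.filter fun j : Fin N => ∀ i : Fin r, (g i).1 j = v i).card : ℚ)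
        = ∑ j : Fin N, ∏ i : Fin r, (if (g i).1 j = v i then (1:ℚ) else 0) := by
    intro g
    rw [← Finset.sum_boole]
    refine Finset.sum_congr rfl fun j _ => ?_
    rw [Finset.prod_boole]
    simp
  have hpi : ∀ (F : ∀ i : Fin r, Bal N (n' i) (m' i) → ℚ),
      (∑ g : ∀ i : Fin r, Bal N (n' i) (m' i), ∏ i : Fin r, F i (g i))
        = ∏ i : Fin r, ∑ h : Bal N (n' i) (m' i), F i h := by
    intro F
    rw [Finset.prod_univ_sum, Fintype.piFinset_univ]
  have hA1sum : ∀ (i : Fin r) (j : Fin N),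
      (∑ h : Bal N (n' i) (m' i), if h.1 j = v i then (1:ℚ) else 0) = A1 i j := by
    intro i j
    rw [Finset.sum_boole]
  have hA2sum : ∀ (i : Fin r) (j k : Fin N),
      (∑ h : Bal N (n' i) (m' i), if h.1 j = v i ∧ h.1 k = v i then (1:ℚ) else 0)
        = A2 i j k := by
    intro i j k
    rw [Finset.sum_boole]
  have hS1 : (∑ g : ∀ i : Fin r, Bal N (n' i) (m' i),
      ((Finset.univ.filter fun j : Fin N => ∀ i : Fin r, (g i).1 j = v i).card : ℚ))
      = ∑ j : Fin N, ∏ i : Fin r, A1 i j := by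
    rw [Finset.sum_congr rfl fun g _ => hbeta g, Finset.sum_comm]
    refine Finset.sum_congr rfl fun j _ => ?_
    rw [hpi (fun i h => if h.1 j = v i then (1:ℚ) else 0)]
    exact Finset.prod_congr rfl fun i _ => hA1sum i j
  have hS2 : (∑ g : ∀ i : Fin r, Bal N (n' i) (m' i),
      ((Finset.univ.filter fun j : Fin N => ∀ i : Fin r, (g i).1 j = v i).card : ℚ) ^ 2)
      = ∑ j : Fin N, ∑ k : Fin N, ∏ i : Fin r, A2 i j k := by
    have hsq : ∀ g : ∀ i : Fin r, Bal N (n' i) (m' i),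
        ((Finset.univ.filter fun j : Fin N => ∀ i : Fin r, (g i).1 j = v i).card : ℚ) ^ 2
        = ∑ j : Fin N, ∑ k : Fin N, ∏ i : Fin r,
            (if (g i).1 j = v i ∧ (g i).1 k = v i then (1:ℚ) else 0) := by
      intro g
      rw [hbeta g, sq, Finset.sum_mul_sum]
      refine Finset.sum_congr rfl fun j _ => Finset.sum_congr rfl fun k _ => ?_
      rw [← Finset.prod_mul_distrib]
      refine Finset.prod_congr rfl fun i _ => ?_
      by_cases h1 : (g i).1 j = v i <;> by_cases h2 : (g i).1 k = v i <;>
        simp [h1, h2]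
    rw [Finset.sum_congr rfl fun g _ => hsq g, Finset.sum_comm]
    refine Finset.sum_congr rfl fun j _ => ?_
    rw [Finset.sum_comm]
    refine Finset.sum_congr rfl fun k _ => ?_
    rw [hpi (fun i h => if h.1 j = v i ∧ h.1 k = v i then (1:ℚ) else 0)]
    exact Finset.prod_congr rfl fun i _ => hA2sum i j k
  set U : ℚ := ∏ i : Fin r, u i with hUdef
  set W : ℚ := ∏ i : Fin r, w i with hWdef
  have hval1 : ∀ j : Fin N, (∏ i : Fin r, A1 i j) = Q * U := by
    intro j
    rw [Finset.prod_congr rfl fun i _ => fact1 i j, Finset.prod_mul_distrib]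
  have hval2 : ∀ j k : Fin N, j ≠ k → (∏ i : Fin r, A2 i j k) = Q * W := by
    intro j k hjk
    rw [Finset.prod_congr rfl fun i _ => fact2 i j k hjk, Finset.prod_mul_distrib]
  have hdiag : ∀ (i : Fin r) (j : Fin N), A2 i j j = A1 i j := by
    intro i j
    simp only [hA2def, hA1def, and_self]
  have hS1' : (∑ j : Fin N, ∏ i : Fin r, A1 i j) = N * (Q * U) := by
    rw [Finset.sum_congr rfl fun j _ => hval1 j, Finset.sum_const, Finset.card_univ,
      Fintype.card_fin, nsmul_eq_mul]
  have hcastN1 : ((N - 1 : ℕ) : ℚ) = (N : ℚ) - 1 := by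
    have h1 : 1 ≤ N := le_trans (by norm_num) hN
    push_cast [Nat.cast_sub h1]
    ring
  have hS2' : (∑ j : Fin N, ∑ k : Fin N, ∏ i : Fin r, A2 i j k)
      = N * (Q * U) + N * (((N : ℚ) - 1) * (Q * W)) := by
    have hrow : ∀ j : Fin N, (∑ k : Fin N, ∏ i : Fin r, A2 i j k)
        = Q * U + ((N : ℚ) - 1) * (Q * W) := by
      intro j
      rw [← Finset.add_sum_erase _ _ (Finset.mem_univ j)]
      congr 1
      · rw [Finset.prod_congr rfl fun i _ => hdiag i j]
        exact hval1 j
      · rw [Finset.sum_congr rfl fun k hk =>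
          hval2 j k (Ne.symm (Finset.mem_erase.1 hk).1)]
        rw [Finset.sum_const, Finset.card_erase_of_mem (Finset.mem_univ j),
          Finset.card_univ, Fintype.card_fin, nsmul_eq_mul, hcastN1]
    rw [Finset.sum_congr rfl fun j _ => hrow j, Finset.sum_add_distrib]
    simp only [Finset.sum_const, Finset.card_univ, Fintype.card_fin, nsmul_eq_mul]
  have hexp : (∑ g : ∀ i : Fin r, Bal N (n' i) (m' i),
      (((Finset.univ.filter fun j : Fin N => ∀ i : Fin r, (g i).1 j = v i).card : ℚ) -
          av) ^ 2)
      = (N * (Q * U) + N * (((N : ℚ) - 1) * (Q * W))) - 2 * av * (N * (Q * U))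
        + Q * av ^ 2 := by
    have hterm : ∀ g : ∀ i : Fin r, Bal N (n' i) (m' i),
        (((Finset.univ.filter fun j : Fin N => ∀ i : Fin r, (g i).1 j = v i).card : ℚ) -
            av) ^ 2
        = ((Finset.univ.filter fun j : Fin N => ∀ i : Fin r, (g i).1 j = v i).card : ℚ) ^ 2
          - 2 * av * ((Finset.univ.filter fun j : Fin N => ∀ i : Fin r, (g i).1 j = v i).card : ℚ)
          + av ^ 2 := fun g => by ring
    rw [Finset.sum_congr rfl fun g _ => hterm g]
    rw [Finset.sum_add_distrib, Finset.sum_sub_distrib]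
    rw [hS2, hS2', ← Finset.mul_sum, hS1, hS1']
    rw [Finset.sum_const, Finset.card_univ, Fintype.card_pi, nsmul_eq_mul]
    have hQc : ((∏ i : Fin r, Fintype.card (Bal N (n' i) (m' i)) : ℕ) : ℚ) = Q := by
      rw [hQdef]
      push_cast
      rfl
    rw [hQc]
  -- reindexing between `Icc 1 r` and `Fin r`
  have reindex : ∀ g : ℕ → ℚ, (∏ i ∈ Finset.Icc 1 r, g i) = ∏ i : Fin r, g (i.val + 1) := by
    intro g
    rw [Fin.prod_univ_eq_prod_range (fun i => g (i + 1)) r]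
    rw [← Finset.Ico_add_one_right_eq_Icc, Finset.prod_Ico_eq_prod_range]
    simp [add_comm]
  have hn0Q : ∀ i : Fin r, ((n' i : ℚ)) ≠ 0 :=
    fun i => Nat.cast_ne_zero.mpr (hn0 i).ne'
  -- per-round values
  have hu : ∀ i : Fin r, u i = 1 / (n' i : ℚ) := by
    intro i
    show ((m' i : ℚ)) / N = 1 / (n' i : ℚ)
    rw [div_eq_div_iff hNne (hn0Q i), one_mul]
    have hmn : m' i * n' i = N := by rw [hNm i]; ring
    exact_mod_cast hmn
  have hw : ∀ i : Fin r, w i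
      = ((N : ℚ) - (n' i : ℚ)) / ((n' i : ℚ) ^ 2 * ((N : ℚ) - 1)) := by
    intro i
    show ((m' i : ℚ) * ((m' i : ℚ) - 1)) / ((N : ℚ) * ((N : ℚ) - 1)) = _
    have hNc : (N : ℚ) = (n' i : ℚ) * (m' i : ℚ) := by exact_mod_cast hNm i
    rw [div_eq_div_iff (mul_ne_zero hNne hN1ne)
      (mul_ne_zero (pow_ne_zero 2 (hn0Q i)) hN1ne)]
    rw [hNc]
    ring
  -- final algebra
  rw [hsum_eq, hcard_eq, hexp]
  have hQcast : ((∏ i : Fin r, Fintype.card (Bal N (n' i) (m' i)) : ℕ) : ℚ) = Q := by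
    rw [hQdef]
    push_cast
    rfl
  rw [hQcast]
  have hUval : U = 1 / ∏ i : Fin r, (n' i : ℚ) := by
    rw [hUdef, Finset.prod_congr rfl fun i _ => hu i]
    rw [Finset.prod_div_distrib]
    simp
  have hPne : (∏ i : Fin r, (n' i : ℚ)) ≠ 0 := Finset.prod_ne_zero_iff.2 fun i _ => hn0Q i
  have hav : av = (N : ℚ) * U := by
    rw [havdef, hUval, reindex fun i => ((n i : ℚ))]
    field_simp
    exact div_self hPne
  have hWval : W = ∏ i ∈ Finset.Icc 1 r,
      ((N : ℚ) - (n i : ℚ)) / ((n i : ℚ) ^ 2 * ((N : ℚ) - 1)) := by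
    rw [hWdef, Finset.prod_congr rfl fun i _ => hw i,
      reindex fun i => ((N : ℚ) - (n i : ℚ)) / ((n i : ℚ) ^ 2 * ((N : ℚ) - 1))]
  have hsq : (∏ i ∈ Finset.Icc 1 r, ((n i : ℚ)) ^ 2)
      = (∏ i ∈ Finset.Icc 1 r, ((n i : ℚ))) ^ 2 := by
    rw [Finset.prod_pow]
  rw [← hWval, hsq]
  have havP : (N : ℚ) / (∏ i ∈ Finset.Icc 1 r, ((n i : ℚ))) = av := rfl
  have hav2 : (N : ℚ) ^ 2 / (∏ i ∈ Finset.Icc 1 r, ((n i : ℚ))) ^ 2 = av ^ 2 := by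
    rw [← havP, div_pow]
  rw [hav2]
  have hNU : (N : ℚ) * U = av := hav.symm
  have key : (1:ℚ)/Q * (↑N * (Q * U) + ↑N * ((↑N - 1) * (Q * W)) - 2 * av * (↑N * (Q * U))
        + Q * av ^ 2)
      = ↑N * U + ↑N * ((↑N - 1) * W) - 2 * av * (↑N * U) + av ^ 2 := by
    field_simp
  rw [key, hNU]
  ring
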